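/- Let (X_i)_{i≥1} be i.i.d. random variables with values in ℤ_{≥−1} = {−1,0,1,2,…}, and let S_0 = 0, S_j = X_1 + ⋯ + X_j. Then for all integers ρ ≥ 1 and n ≥ 1, the first hitting time ζ_ρ = inf{ j ≥ 1 : S_j = −ρ } satisfies P(ζ_ρ = n) = (ρ/n) · P(S_n = −ρ). -/

import Mathlib

open MeasureTheory ProbabilityTheory Filter
open scoped ENNReal


open Classical in
private lemma cycle_count (x : ℕ → ℤ) (n ρ : ℕ) (hn : 1 ≤ n) (hρ : 1 ≤ ρ)
    (hx : ∀ i, -1 ≤ x i) (hsum : ∑ i ∈ Finset.range n, x i = -(ρ : ℤ)) :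
    ((Finset.range n).filter (fun k => ∀ j, 1 ≤ j → j < n →
      (∑ i ∈ Finset.range j, x ((k + i) % n)) ≠ -(ρ : ℤ))).card = ρ := by
  classical
  set T : ℕ → ℤ := fun j => ∑ i ∈ Finset.range j, x (i % n) with hT
  have hT0 : T 0 = 0 := by simp [hT]
  have hTsucc : ∀ j, T (j + 1) = T j + x (j % n) := fun j => Finset.sum_range_succ _ j
  have hTstep : ∀ j, T j - 1 ≤ T (j + 1) := by
    intro j; rw [hTsucc]; have := hx (j % n); omega
  have hTper : ∀ j, T (j + n) = T j - ρ := by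
    intro j
    induction j with
    | zero =>
      have h1 : ∀ i ∈ Finset.range n, x (i % n) = x i := fun i hi => by
        rw [Nat.mod_eq_of_lt (Finset.mem_range.1 hi)]
      have h2 : T n = ∑ i ∈ Finset.range n, x i := Finset.sum_congr rfl h1
      show T (0 + n) = T 0 - ρ
      rw [Nat.zero_add, h2, hsum, hT0]
      ring
    | succ j ih =>
      have h1 : j + 1 + n = (j + n) + 1 := by omega
      rw [h1, hTsucc, hTsucc, ih, Nat.add_mod_right]; ring
  have hrot : ∀ k j, (∑ i ∈ Finset.range j, x ((k + i) % n)) = T (k + j) - T k := by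
    intro k j
    induction j with
    | zero => simp
    | succ j ih =>
      rw [Finset.sum_range_succ, ih, ← Nat.add_assoc, hTsucc]; ring
  have hcross : ∀ a c, T a > c → ∀ j, (∀ i, 1 ≤ i → i ≤ j → T (a + i) ≠ c) →
      T (a + j) > c := by
    intro a c ha j
    induction j with
    | zero => intro _; simpa using ha
    | succ j ih =>
      intro h
      have h1 : T (a + j) > c := ih (fun i hi1 hi2 => h i hi1 (by omega))
      have h2 := hTstep (a + j)
      have h3 : T (a + (j + 1)) ≠ c := h (j + 1) (by omega) le_rfl
      have h4 : T (a + (j + 1)) = T ((a + j) + 1) := by rw [Nat.add_assoc]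
      omega
  -- window lemma: good k implies the walk stays above T k - ρ before time k + n
  have hwin : ∀ k, (∀ j, 1 ≤ j → j < n →
      (∑ i ∈ Finset.range j, x ((k + i) % n)) ≠ -(ρ : ℤ)) →
      ∀ j, j < n → T (k + j) > T k - ρ := by
    intro k hk j hj
    refine hcross k (T k - ρ) (by omega) j (fun i hi1 hi2 => ?_)
    have := hk i hi1 (by omega)
    rw [hrot k i] at this
    omega
  -- record lemma
  have hrec : ∀ k, k < n → (∀ j, 1 ≤ j → j < n →
      (∑ i ∈ Finset.range j, x ((k + i) % n)) ≠ -(ρ : ℤ)) →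
      ∀ m, m < k + n → T m > T (k + n) := by
    intro k hkn hk m hm
    have hkn' : T (k + n) = T k - ρ := hTper k
    rcases le_or_gt k m with h | h
    · have hj : m - k < n := by omega
      have := hwin k hk (m - k) hj
      have hmk : k + (m - k) = m := by omega
      rw [hmk] at this; omega
    · have h1 : T (m + n) = T m - ρ := hTper m
      have h2 : m + n = k + (m + n - k) := by omega
      have h3 : m + n - k < n := by omega
      have h4 := hwin k hk (m + n - k) h3
      rw [← h2] at h4
      omega
  -- minimum over [0, n)
  obtain ⟨j₀, hj₀mem, hj₀min⟩ := Finset.exists_min_image (Finset.range n) T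
    ⟨0, Finset.mem_range.2 (by omega)⟩
  have hj₀n : j₀ < n := Finset.mem_range.1 hj₀mem
  set m1 : ℤ := T j₀ with hm1
  have hm1le : m1 ≤ 0 := by
    have := hj₀min 0 (Finset.mem_range.2 (by omega)); omega
  -- hitting lemma
  have hhit : ∀ b v, (v : ℤ) < 0 → T b ≤ v → ∃ p, p ≤ b ∧ T p = v := by
    intro b
    induction b with
    | zero => intro v hv hb; omega
    | succ b ih =>
      intro v hv hb
      rcases le_or_gt (T b) v with h | h
      · obtain ⟨p, hp1, hp2⟩ := ih v hv h
        exact ⟨p, by omega, hp2⟩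
      · have := hTstep b
        exact ⟨b + 1, le_rfl, by omega⟩
  have hex : ∀ v ∈ Finset.Ico (m1 - ρ) m1, ∃ p, T p = v := by
    intro v hv
    rw [Finset.mem_Ico] at hv
    have h1 : T (j₀ + n) = m1 - ρ := hTper j₀
    obtain ⟨p, _, hp2⟩ := hhit (j₀ + n) v (by omega) (by omega)
    exact ⟨p, hp2⟩
  have key : ((Finset.range n).filter (fun k => ∀ j, 1 ≤ j → j < n →
      (∑ i ∈ Finset.range j, x ((k + i) % n)) ≠ -(ρ : ℤ))).card
      = (Finset.Ico (m1 - ρ) m1).card := by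
    refine Finset.card_bij' (fun k _ => T (k + n)) (fun v hv => Nat.find (hex v hv) - n)
      ?_ ?_ ?_ ?_
    · -- maps into Ico
      intro k hk
      simp only [Finset.mem_filter, Finset.mem_range] at hk
      obtain ⟨hkn, hgood⟩ := hk
      have h1 : T (k + n) = T k - ρ := hTper k
      have h2 : m1 ≤ T k := hj₀min k (Finset.mem_range.2 hkn)
      have h3 : T (k + n) < m1 := hrec k hkn hgood j₀ (by omega)
      rw [Finset.mem_Ico]
      omega
    · -- inverse maps into filter
      intro v hv
      have hvv := Finset.mem_Ico.1 hv
      have hTp : T (Nat.find (hex v hv)) = v := Nat.find_spec (hex v hv)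
      have hpmin : ∀ m, m < Nat.find (hex v hv) → T m ≠ v :=
        fun m hm => Nat.find_min (hex v hv) hm
      set p := Nat.find (hex v hv) with hpdef
      have hpn : n ≤ p := by
        by_contra h
        push_neg at h
        have := hj₀min p (Finset.mem_range.2 h)
        omega
      have hp2n : p < 2 * n := by
        have h1 : T (j₀ + n) = m1 - ρ := hTper j₀
        obtain ⟨q, hq1, hq2⟩ := hhit (j₀ + n) v (by omega) (by omega)
        have : p ≤ q := Nat.find_min' (hex v hv) hq2
        omega
      simp only [Finset.mem_filter, Finset.mem_range]
      refine ⟨by omega, ?_⟩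
      intro j hj1 hj2
      rw [hrot (p - n) j]
      have h1 : (p - n) + n = p := by omega
      have h2 : T ((p - n) + n) = T (p - n) - ρ := hTper (p - n)
      rw [h1] at h2
      have h3 : T ((p - n) + j) ≠ v := hpmin _ (by omega)
      omega
    · -- left inverse
      intro k hk
      simp only [Finset.mem_filter, Finset.mem_range] at hk
      obtain ⟨hkn, hgood⟩ := hk
      have hfind : ∀ (h : ∃ p, T p = T (k + n)), Nat.find h = k + n := by
        intro h
        rw [Nat.find_eq_iff]
        refine ⟨rfl, fun m hm hTm => ?_⟩
        have := hrec k hkn hgood m hm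
        omega
      rw [hfind]
      omega
    · -- right inverse
      intro v hv
      have key4 : ∀ (h : ∃ p, T p = v), T (Nat.find h - n + n) = v := by
        intro h
        have hTp : T (Nat.find h) = v := Nat.find_spec h
        have hvv := Finset.mem_Ico.1 hv
        have hpn : n ≤ Nat.find h := by
          by_contra hc
          push_neg at hc
          have := hj₀min (Nat.find h) (Finset.mem_range.2 hc)
          omega
        rw [Nat.sub_add_cancel hpn, hTp]
      exact key4 _
  rw [key, Int.card_Ico]
  omega

open Fin.NatCast in
/-- Kemperman's formula: for a random walk `S` with i.i.d. steps taking values in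
`ℤ_{≥−1} = {−1,0,1,2,…}`, for all `ρ ≥ 1` and `n ≥ 1`, the first hitting time
`ζ_ρ = inf{j ≥ 1 : S_j = −ρ}` satisfies `P(ζ_ρ = n) = (ρ/n) P(S_n = −ρ)`. -/
theorem stmt15 {Ω : Type} [MeasurableSpace Ω] (μ : Measure Ω) [IsProbabilityMeasure μ]
    (X : ℕ → Ω → ℤ) (hmeas : ∀ i, Measurable (X i)) (hval : ∀ i ω, -1 ≤ X i ω)
    (hindep : iIndepFun X μ)
    (hident : ∀ i, Measure.map (X i) μ = Measure.map (X 0) μ)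
    (S : ℕ → Ω → ℤ) (hS : ∀ j ω, S j ω = ∑ i ∈ Finset.range j, X i ω)
    (ρ n : ℕ) (hρ : 1 ≤ ρ) (hn : 1 ≤ n) :
    μ {ω | S n ω = -(ρ : ℤ) ∧ ∀ j : ℕ, 1 ≤ j → j < n → S j ω ≠ -(ρ : ℤ)}
      = ((ρ : ℝ≥0∞) / (n : ℝ≥0∞)) * μ {ω | S n ω = -(ρ : ℤ)} := by
  classical
  haveI hNZ : NeZero n := ⟨by omega⟩
  have hallmeas : ∀ s : Set (Fin n → ℤ), MeasurableSet s :=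
    fun s => s.to_countable.measurableSet
  haveI : IsProbabilityMeasure (Measure.map (X 0) μ) :=
    Measure.isProbabilityMeasure_map (hmeas 0).aemeasurable
  set Y : Ω → (Fin n → ℤ) := fun ω i => X i ω with hY
  have hYmeas : Measurable Y := measurable_pi_lambda _ (fun i => hmeas i)
  have hcast : ∀ a : ℕ, ((a % n : ℕ) : Fin n) = ((a : ℕ) : Fin n) := by
    intro a
    apply Fin.ext
    simp only [Fin.val_natCast]
    exact Nat.mod_mod_of_dvd a dvd_rfl
  -- the joint law is the product measure
  have hpi : Measure.map Y μ = Measure.pi (fun _ : Fin n => Measure.map (X 0) μ) := by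
    refine (Measure.pi_eq fun s hs => ?_).symm
    rw [Measure.map_apply hYmeas (hallmeas _)]
    have hpre : Y ⁻¹' (Set.pi Set.univ s) = ⋂ i ∈ Finset.range n, X i ⁻¹' (s ((i : ℕ) : Fin n)) := by
      ext ω
      simp only [Set.mem_preimage, Set.mem_pi, Set.mem_univ, forall_true_left, Set.mem_iInter,
        Finset.mem_range]
      constructor
      · intro h i hi
        have e : ((i : ℕ) : Fin n) = ⟨i, hi⟩ := by
          apply Fin.ext
          simp [Fin.val_natCast, Nat.mod_eq_of_lt hi]
        have := h ⟨i, hi⟩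
        rw [e]
        exact this
      · intro h i
        have := h i.val i.isLt
        rwa [Fin.cast_val_eq_self] at this
    rw [hpre, hindep.measure_inter_preimage_eq_mul (Finset.range n) (fun i _ => trivial)]
    have hfac : ∀ i : ℕ, μ (X i ⁻¹' (s ((i : ℕ) : Fin n)))
        = Measure.map (X 0) μ (s ((i : ℕ) : Fin n)) := by
      intro i
      rw [← hident i, Measure.map_apply (hmeas i) trivial]
    rw [Finset.prod_congr rfl (fun i _ => hfac i)]
    rw [← Fin.prod_univ_eq_prod_range (fun i => Measure.map (X 0) μ (s ((i : ℕ) : Fin n))) n]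
    exact Fintype.prod_congr _ _ fun i => by rw [Fin.cast_val_eq_self]
  -- the relevant sets of values
  set B : Set (Fin n → ℤ) :=
    {y | (∑ i ∈ Finset.range n, y ((i : ℕ) : Fin n)) = -(ρ : ℤ)} with hB
  set H : Set (Fin n → ℤ) := {y | ∀ i, -1 ≤ y i} with hH
  set G : ℕ → Set (Fin n → ℤ) := fun k => {y | y ∈ B ∧ ∀ j, 1 ≤ j → j < n →
      (∑ i ∈ Finset.range j, y (((k + i) % n : ℕ) : Fin n)) ≠ -(ρ : ℤ)} with hG
  set ν : Measure (Fin n → ℤ) := Measure.map Y μ with hν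
  have hYH : ∀ ω, Y ω ∈ H := fun ω i => hval i.val ω
  -- identification of events
  have hYB : ∀ ω, (Y ω ∈ B ↔ S n ω = -(ρ : ℤ)) := by
    intro ω
    have hsum : (∑ i ∈ Finset.range n, (Y ω) ((i : ℕ) : Fin n)) = S n ω := by
      rw [hS n ω]
      refine Finset.sum_congr rfl fun i hi => ?_
      show X (((i : ℕ) : Fin n) : ℕ) ω = X i ω
      rw [Fin.val_natCast, Nat.mod_eq_of_lt (Finset.mem_range.1 hi)]
    rw [hB, Set.mem_setOf_eq, hsum]
  have hYG : ∀ ω, (Y ω ∈ G 0 ↔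
      (S n ω = -(ρ : ℤ) ∧ ∀ j : ℕ, 1 ≤ j → j < n → S j ω ≠ -(ρ : ℤ))) := by
    intro ω
    rw [hG]
    simp only [Set.mem_setOf_eq]
    refine and_congr (hYB ω) ?_
    refine forall_congr' fun j => ?_
    refine imp_congr_right fun hj1 => imp_congr_right fun hj2 => ?_
    have hsum : (∑ i ∈ Finset.range j, (Y ω) (((0 + i) % n : ℕ) : Fin n)) = S j ω := by
      rw [hS j ω]
      refine Finset.sum_congr rfl fun i hi => ?_
      have hi' : i < n := lt_of_lt_of_le (Finset.mem_range.1 hi) (le_of_lt hj2)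
      show X ((((0 + i) % n : ℕ) : Fin n) : ℕ) ω = X i ω
      rw [Fin.val_natCast, Nat.zero_add, Nat.mod_eq_of_lt hi', Nat.mod_eq_of_lt hi']
    rw [hsum]
  have hE1 : μ {ω | S n ω = -(ρ : ℤ) ∧ ∀ j : ℕ, 1 ≤ j → j < n → S j ω ≠ -(ρ : ℤ)}
      = ν (G 0 ∩ H) := by
    rw [hν, Measure.map_apply hYmeas (hallmeas _)]
    congr 1
    ext ω
    simp only [Set.mem_setOf_eq, Set.mem_preimage, Set.mem_inter_iff]
    rw [← hYG ω]
    exact ⟨fun h => ⟨h, hYH ω⟩, fun h => h.1⟩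
  have hE2 : μ {ω | S n ω = -(ρ : ℤ)} = ν (B ∩ H) := by
    rw [hν, Measure.map_apply hYmeas (hallmeas _)]
    congr 1
    ext ω
    simp only [Set.mem_setOf_eq, Set.mem_preimage, Set.mem_inter_iff]
    rw [← hYB ω]
    exact ⟨fun h => ⟨h, hYH ω⟩, fun h => h.1⟩
  -- invariance under rotation
  have hinv : ∀ k, k < n → ν (G k ∩ H) = ν (G 0 ∩ H) := by
    intro k hk
    set c : Fin n ≃ Fin n := Equiv.addLeft ((k : ℕ) : Fin n) with hc
    set Tc : (Fin n → ℤ) → (Fin n → ℤ) := fun y i => y (c i) with hTc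
    have hTcmeas : Measurable Tc := measurable_pi_lambda _ (fun i => measurable_pi_apply _)
    have hmap : Measure.map Tc ν = ν := by
      rw [hpi]
      refine (Measure.pi_eq fun s hs => ?_).symm
      rw [Measure.map_apply hTcmeas (hallmeas _)]
      have hps : Tc ⁻¹' (Set.pi Set.univ s) = Set.pi Set.univ (fun i => s (c.symm i)) := by
        ext y
        simp only [Set.mem_preimage, Set.mem_pi, Set.mem_univ, forall_true_left, hTc]
        exact ⟨fun h i => by simpa using h (c.symm i), fun h i => by simpa using h (c i)⟩
      rw [hps, Measure.pi_pi]
      exact Equiv.prod_comp c.symm (fun i => Measure.map (X 0) μ (s i))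
    have hsum_fin : ∀ g : Fin n → ℤ,
        (∑ i ∈ Finset.range n, g ((i : ℕ) : Fin n)) = ∑ i : Fin n, g i := by
      intro g
      rw [← Fin.sum_univ_eq_sum_range (fun i => g ((i : ℕ) : Fin n)) n]
      exact Fintype.sum_congr _ _ fun i => by rw [Fin.cast_val_eq_self]
    have hrotpt : ∀ (y : Fin n → ℤ) (i : ℕ),
        Tc y (((0 + i) % n : ℕ) : Fin n) = y (((k + i) % n : ℕ) : Fin n) := by
      intro y i
      show y (c (((0 + i) % n : ℕ) : Fin n)) = _
      congr 1
      rw [hc]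
      show ((k : ℕ) : Fin n) + (((0 + i) % n : ℕ) : Fin n) = (((k + i) % n : ℕ) : Fin n)
      rw [Nat.zero_add, hcast i, hcast (k + i), ← Nat.cast_add]
    have hpre : Tc ⁻¹' (G 0 ∩ H) = G k ∩ H := by
      ext y
      simp only [Set.mem_preimage, Set.mem_inter_iff, hG, hB, hH, Set.mem_setOf_eq]
      have e1 : (∑ i ∈ Finset.range n, Tc y ((i : ℕ) : Fin n))
          = ∑ i ∈ Finset.range n, y ((i : ℕ) : Fin n) := by
        rw [hsum_fin (fun i => Tc y i), hsum_fin y]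
        exact Equiv.sum_comp c y
      have e2 : ∀ j, (∑ i ∈ Finset.range j, Tc y (((0 + i) % n : ℕ) : Fin n))
          = ∑ i ∈ Finset.range j, y (((k + i) % n : ℕ) : Fin n) :=
        fun j => Finset.sum_congr rfl fun i _ => hrotpt y i
      have e3 : (∀ i, -1 ≤ Tc y i) ↔ ∀ i, -1 ≤ y i := by
        constructor
        · intro h i
          have := h (c.symm i)
          show -1 ≤ y i
          rw [hTc] at this
          simpa using this
        · intro h i
          exact h (c i)
      constructor
      · rintro ⟨⟨hb, hg⟩, hh⟩
        refine ⟨⟨by rw [← e1]; exact hb, fun j hj1 hj2 => by rw [← e2 j]; exact hg j hj1 hj2⟩,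
          e3.1 hh⟩
      · rintro ⟨⟨hb, hg⟩, hh⟩
        refine ⟨⟨by rw [e1]; exact hb, fun j hj1 hj2 => by rw [e2 j]; exact hg j hj1 hj2⟩,
          e3.2 hh⟩
    calc ν (G k ∩ H) = ν (Tc ⁻¹' (G 0 ∩ H)) := by rw [hpre]
      _ = Measure.map Tc ν (G 0 ∩ H) := (Measure.map_apply hTcmeas (hallmeas _)).symm
      _ = ν (G 0 ∩ H) := by rw [hmap]
  -- the counting identity
  have hcount : ∑ k ∈ Finset.range n, ν (G k ∩ H) = (ρ : ℝ≥0∞) * ν (B ∩ H) := by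
    have h1 : ∀ k, ν (G k ∩ H) = ∫⁻ y, (G k ∩ H).indicator 1 y ∂ν :=
      fun k => (lintegral_indicator_one (hallmeas _)).symm
    have h2 : ν (B ∩ H) = ∫⁻ y, (B ∩ H).indicator 1 y ∂ν :=
      (lintegral_indicator_one (hallmeas _)).symm
    rw [Finset.sum_congr rfl (fun k _ => h1 k), h2,
      ← lintegral_finset_sum _ (fun k _ => (measurable_one.indicator (hallmeas _)))]
    rw [← lintegral_const_mul _ (measurable_one.indicator (hallmeas _))]
    refine lintegral_congr fun y => ?_
    by_cases hyH : y ∈ H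
    · by_cases hyB : y ∈ B
      · have hyB' : (∑ i ∈ Finset.range n, y ((i : ℕ) : Fin n)) = -(ρ : ℤ) := by
          rw [hB] at hyB; exact hyB
        have hcard := cycle_count (fun i => y ((i : ℕ) : Fin n)) n ρ hn hρ
          (fun i => hyH _) hyB'
        have hmem : ∀ k, (y ∈ G k ∩ H) ↔ (∀ j, 1 ≤ j → j < n →
            (∑ i ∈ Finset.range j, y (((k + i) % n : ℕ) : Fin n)) ≠ -(ρ : ℤ)) := by
          intro k
          simp only [Set.mem_inter_iff, hG, Set.mem_setOf_eq]
          constructor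
          · rintro ⟨⟨-, h⟩, -⟩; exact h
          · intro h; exact ⟨⟨hyB, h⟩, hyH⟩
        simp only [Set.indicator_apply, Pi.one_apply]
        rw [Finset.sum_boole, if_pos (Set.mem_inter hyB hyH)]
        rw [Finset.filter_congr (fun k _ => hmem k), mul_one]
        exact congrArg (fun m : ℕ => (m : ℝ≥0∞)) (by convert hcard)
      · have h0 : ∀ k ∈ Finset.range n, (G k ∩ H).indicator (1 : (Fin n → ℤ) → ℝ≥0∞) y = 0 := by
          intro k _
          apply Set.indicator_of_notMem
          rintro ⟨hgk, -⟩
          rw [hG, Set.mem_setOf_eq] at hgk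
          exact hyB hgk.1
        rw [Finset.sum_congr rfl h0, Set.indicator_of_notMem (fun h => hyB h.1)]
        simp
    · have h0 : ∀ k ∈ Finset.range n, (G k ∩ H).indicator (1 : (Fin n → ℤ) → ℝ≥0∞) y = 0 :=
        fun k _ => Set.indicator_of_notMem (fun h => hyH h.2) _
      rw [Finset.sum_congr rfl h0, Set.indicator_of_notMem (fun h => hyH h.2)]
      simp
  have hn_sum : ∑ k ∈ Finset.range n, ν (G k ∩ H) = (n : ℝ≥0∞) * ν (G 0 ∩ H) := by
    rw [Finset.sum_congr rfl (fun k hk => hinv k (Finset.mem_range.1 hk))]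
    simp [Finset.sum_const, nsmul_eq_mul]
  rw [hn_sum] at hcount
  rw [hE1, hE2]
  have hne : (n : ℝ≥0∞) ≠ 0 := by
    simp only [ne_eq, Nat.cast_eq_zero]; omega
  have hnetop : (n : ℝ≥0∞) ≠ ⊤ := ENNReal.natCast_ne_top n
  calc ν (G 0 ∩ H) = (n : ℝ≥0∞) * ν (G 0 ∩ H) / n := by
        rw [mul_comm, mul_div_assoc, ENNReal.div_self hne hnetop, mul_one]
    _ = (ρ : ℝ≥0∞) * ν (B ∩ H) / n := by rw [hcount]
    _ = (ρ : ℝ≥0∞) / n * ν (B ∩ H) := by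
        rw [div_eq_mul_inv, div_eq_mul_inv, mul_right_comm]
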